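/- For any permutation-invariant density operator ρ^N on H^⊗N (π ρ^N π† = ρ^N for all permutations π of the N factors), there exists a unit vector Ψ in the symmetric subspace Sym^N(H ⊗ K) with K ≅ H, such that tracing out the K-factors of |Ψ⟩⟨Ψ| recovers ρ^N. -/

import Mathlib

open scoped ComplexOrder Matrix

section
open scoped MatrixOrder
lemma psd_sqrt_aux {n : Type*} [Fintype n] [DecidableEq n] {ρ : Matrix n n ℂ}
    (hρ : ρ.PosSemidef) :
    ∃ S : Matrix n n ℂ, S.PosSemidef ∧ S * S = ρ ∧
      ∀ T : Matrix n n ℂ, T.PosSemidef → T ^ 2 = ρ → T = S := by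
  refine ⟨CFC.sqrt ρ, Matrix.nonneg_iff_posSemidef.mp (CFC.sqrt_nonneg ρ),
    CFC.sqrt_mul_sqrt_self ρ hρ.nonneg, fun T hT hsq => ?_⟩
  exact ((CFC.sqrt_eq_iff ρ T hρ.nonneg hT.nonneg).mpr (by rw [← hsq, pow_two])).symm
end

/-- Symmetric purification: any permutation-invariant density operator ρ^N on
H^⊗N (here H = C^d, with H^⊗N in the product basis indexed by strings
Fin N → Fin d) admits a purifying unit vector Ψ in the symmetric subspace of
(H ⊗ K)^⊗N with K ≅ H (indexed by strings Fin N → Fin d × Fin d, symmetric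
under simultaneous permutation of the N pairs), whose partial trace over the
K-factors recovers ρ^N. -/
theorem symmetric_purification {d N : ℕ}
    (ρ : Matrix (Fin N → Fin d) (Fin N → Fin d) ℂ)
    (hρ : ρ.PosSemidef) (htr : ρ.trace = 1)
    (hsym : ∀ (π : Equiv.Perm (Fin N)) (b c : Fin N → Fin d),
      ρ (b ∘ π) (c ∘ π) = ρ b c) :
    ∃ Ψ : (Fin N → Fin d × Fin d) → ℂ,
      (∑ b, ‖Ψ b‖ ^ 2 = 1) ∧
      (∀ (π : Equiv.Perm (Fin N)) (b : Fin N → Fin d × Fin d), Ψ (b ∘ π) = Ψ b) ∧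
      (∀ b c : Fin N → Fin d,
        ρ b c = ∑ k : Fin N → Fin d,
          Ψ (fun i => (b i, k i)) * (starRingEnd ℂ) (Ψ (fun i => (c i, k i)))) := by
  classical
  obtain ⟨S, hSps, hSmul, huniq⟩ := psd_sqrt_aux hρ
  -- symmetry of S
  have hSsym : ∀ (π : Equiv.Perm (Fin N)) (b c : Fin N → Fin d),
      S (b ∘ π) (c ∘ π) = S b c := by
    intro π b c
    set E : (Fin N → Fin d) ≃ (Fin N → Fin d) :=
      Equiv.arrowCongr π.symm (Equiv.refl (Fin d)) with hE
    have hEapp : ∀ f : Fin N → Fin d, E f = f ∘ π := fun f => rfl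
    have hT : (S.submatrix E E).PosSemidef := hSps.submatrix E
    have hsq : (S.submatrix E E) ^ 2 = ρ := by
      rw [pow_two, Matrix.submatrix_mul_equiv, hSmul]
      ext x y
      exact hsym π x y
    have h2 : S.submatrix E E = S := huniq _ hT hsq
    calc S (b ∘ π) (c ∘ π) = (S.submatrix E E) b c := rfl
      _ = S b c := by rw [h2]
  -- the purifying vector
  refine ⟨fun g => S (fun i => (g i).1) (fun i => (g i).2), ?_, ?_, ?_⟩
  · -- norm
    have key : ∀ b c : Fin N → Fin d,
        (∑ k : Fin N → Fin d, S b k * (starRingEnd ℂ) (S c k)) = ρ b c := by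
      intro b c
      have : ∀ k, (starRingEnd ℂ) (S c k) = S k c := fun k => hSps.1.apply k c
      simp_rw [this]
      rw [← Matrix.mul_apply, hSmul]
    have hcast : ((∑ g : Fin N → Fin d × Fin d,
        ‖S (fun i => (g i).1) (fun i => (g i).2)‖ ^ 2 : ℝ) : ℂ) = 1 := by
      push_cast
      have := Equiv.sum_comp (Equiv.arrowProdEquivProdArrow (Fin N) (fun _ => Fin d) (fun _ => Fin d)).symm
        (fun g : Fin N → Fin d × Fin d =>
          ((‖S (fun i => (g i).1) (fun i => (g i).2)‖ : ℂ)) ^ 2)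
      rw [← this]
      rw [Fintype.sum_prod_type]
      have habs : ∀ z : ℂ, ((‖z‖ : ℂ)) ^ 2 = z * (starRingEnd ℂ) z := by
        intro z
        rw [Complex.mul_conj, ← Complex.ofReal_pow, Complex.sq_norm]
      calc ∑ b : Fin N → Fin d, ∑ k : Fin N → Fin d,
            ((‖S _ _‖ : ℂ)) ^ 2
          = ∑ b : Fin N → Fin d, ∑ k : Fin N → Fin d,
            S b k * (starRingEnd ℂ) (S b k) := by
            refine Finset.sum_congr rfl fun b _ => Finset.sum_congr rfl fun k _ => habs _
        _ = ∑ b : Fin N → Fin d, ρ b b := by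
            refine Finset.sum_congr rfl fun b _ => key b b
        _ = ρ.trace := rfl
        _ = 1 := htr
    exact_mod_cast hcast
  · intro π b
    exact hSsym π (fun i => (b i).1) (fun i => (b i).2)
  · intro b c
    have : ∀ k, (starRingEnd ℂ) (S c k) = S k c := fun k => hSps.1.apply k c
    simp only [this]
    rw [← hSmul, Matrix.mul_apply]
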